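/- Let Σ(z), B̃_i(·), relations as in the polling model, and additionally a routing polynomial P_i(z) = p_{i0} + Σ_{k=1}^m p_{ik}·z_k with p_{i0} + Σ_k p_{ik} = 1. Suppose: (1) (V^b_i(z) − V^c_i(z))/(Λ_i·EC) = S^b_i(z) − S^c_i(z)·P_i(z) for i = 1,…,m; (2) S^c_i(z) = S^b_i(z)·B̃_i(Σ(z))/z_i; (3) V^b_{i+1}(z) = V^c_i(z)·S̃_i(Σ(z)); and L(z) is defined by the same stochastic mean value formula as in the polling model with Λ_i replacing λ_i in the visit weights, Σ(z) = Σ_j λ_j(1−z_j). Then Σ_{i=1}^m λ_i(1−z_i)·L(z) = Σ_{i=1}^m Λ_i·(P_i(z) − z_i)·S^c_i(z). -/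
import Mathlib


open Finset

/-- Roving-server derivation (Case 5, equation (5.9)): from the generalized
Eisenberg relation (5.10), the service relation, the switchover relation and the
mean value representation of `L`, derive
`Σ_i λ_i(1-z_i)·L(z) = Σ_i Λ_i·(P_i(z) - z_i)·S^c_i(z)`. -/
theorem stmt12 (m : ℕ) [NeZero m] (hm : 1 ≤ m)
    (lam Lam b s : Fin m → ℝ) (EC : ℝ)
    (z Vb Vc Sb Sc Bt St : Fin m → ℝ)
    (hEC : EC ≠ 0) (hb : ∀ i, b i ≠ 0) (hs : ∀ i, s i ≠ 0)
    (hLam : ∀ i, Lam i ≠ 0) (hz : ∀ i, z i ≠ 0)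
    (p0 : Fin m → ℝ) (p : Fin m → Fin m → ℝ)
    (hp1 : ∀ i, p0 i + ∑ k, p i k = 1)
    (Pp : Fin m → ℝ) (hPp : ∀ i, Pp i = p0 i + ∑ k, p i k * z k)
    (Sig : ℝ) (hSig : Sig = ∑ j, lam j * (1 - z j)) (hSig0 : Sig ≠ 0)
    (h1 : ∀ i, (Vb i - Vc i) / (Lam i * EC) = Sb i - Sc i * Pp i)
    (h2 : ∀ i, Sc i = Sb i * Bt i / z i)
    (h3 : ∀ i, Vb (i + 1) = Vc i * St i)
    (L : ℝ)
    (hL : L = (1 / EC) * ∑ i, (Lam i * EC * b i * Sb i * (1 - Bt i) / (b i * Sig)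
        + s i * Vc i * (1 - St i) / (s i * Sig))) :
    ∑ i, lam i * (1 - z i) * L = ∑ i, Lam i * (Pp i - z i) * Sc i := by
  have hVb : ∀ i, Vb i - Vc i = (Sb i - Sc i * Pp i) * (Lam i * EC) := fun i =>
    (div_eq_iff (mul_ne_zero (hLam i) hEC)).1 (h1 i)
  have hSbBt : ∀ i, Sb i * Bt i = Sc i * z i := fun i => by
    rw [h2 i, div_mul_cancel₀ _ (hz i)]
  have hshift : ∑ i, Vc i * St i = ∑ i, Vb i := by
    have h := Equiv.sum_comp (Equiv.addRight (1 : Fin m)) Vb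
    simp only [Equiv.coe_addRight] at h
    calc ∑ i, Vc i * St i = ∑ i, Vb (i + 1) := by simp [h3]
      _ = ∑ i, Vb i := h
  have hterm : ∀ i ∈ Finset.univ, Lam i * EC * b i * Sb i * (1 - Bt i) / (b i * Sig)
      + s i * Vc i * (1 - St i) / (s i * Sig)
      = (Lam i * EC * Sb i * (1 - Bt i) + Vc i - Vc i * St i) / Sig := by
    intro i _
    field_simp [hb i, hs i]
    ring
  rw [Finset.sum_congr rfl hterm, ← Finset.sum_div] at hL
  have hsum : ∑ i, (Lam i * EC * Sb i * (1 - Bt i) + Vc i - Vc i * St i)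
      = EC * ∑ i, Lam i * (Pp i - z i) * Sc i := by
    have step : ∑ i, (Lam i * EC * Sb i * (1 - Bt i) + Vc i - Vc i * St i)
        = ∑ i, (Lam i * EC * Sb i * (1 - Bt i) + Vc i) - ∑ i, Vc i * St i := by
      rw [← Finset.sum_sub_distrib]
    rw [step, hshift, ← Finset.sum_sub_distrib, Finset.mul_sum]
    apply Finset.sum_congr rfl
    intro i _
    linear_combination -hVb i - Lam i * EC * hSbBt i
  rw [← Finset.sum_mul, ← hSig, hL, hsum]
  field_simp
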